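/- Let a₀ > 0, a₁ > 0, a₂ > 0, and β > γ > 1. If a₁ > (γ/β) · a₂^{β/γ} / a₀^{(β−γ)/γ}, then a₀ · a₁^{γ/(β−γ)} > a₂^{β/(β−γ)} · ((γ/β)^{γ/(β−γ)} − (γ/β)^{β/(β−γ)}); in particular, −a₀ − a₁ z^β + a₂ z^γ < 0 for all z ∈ [0,+∞). -/

import Mathlib

open Set Filter

/-- Signed power: `⌊x⌉^a = sign(x) * |x|^a`. -/
noncomputable def spow (x a : ℝ) : ℝ := Real.sign x * |x| ^ a

/-- Dilation `Λ_r(l, x) = (l^{r₁} x₁, …, l^{rₙ} xₙ)`. -/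
noncomputable def dil {n : ℕ} (r : Fin n → ℝ) (l : ℝ) (x : Fin n → ℝ) : Fin n → ℝ :=
  fun i => l ^ r i * x i

/-- `x` is a solution of `ẋ = F(x)` on `[s, ∞)`. -/
def IsSolOn {E : Type*} [NormedAddCommGroup E] [NormedSpace ℝ E]
    (F : E → E) (x : ℝ → E) (s : ℝ) : Prop :=
  ∀ t ∈ Set.Ici s, HasDerivWithinAt x (F (x t)) (Set.Ici s) t

/-- The origin is (locally) asymptotically stable for `ẋ = F(x)`. -/
def AsympStable {E : Type*} [NormedAddCommGroup E] [NormedSpace ℝ E] (F : E → E) : Prop :=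
  (∀ ε > 0, ∃ η > 0, ∀ x : ℝ → E, IsSolOn F x 0 → ‖x 0‖ < η → ∀ t ≥ 0, ‖x t‖ < ε) ∧
  (∃ δ > 0, ∀ x : ℝ → E, IsSolOn F x 0 → ‖x 0‖ < δ →
    Filter.Tendsto x Filter.atTop (nhds 0))

/-- The origin is small-time stable for `ẋ = F(x)`. -/
def SmallTimeStable {E : Type*} [NormedAddCommGroup E] [NormedSpace ℝ E] (F : E → E) : Prop :=
  ∀ ε > 0, ∃ η > 0, ∀ x : ℝ → E, IsSolOn F x 0 → ‖x 0‖ < η →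
    x ε = 0 ∧ ∀ t ≥ 0, ‖x t‖ < ε

/-- If `a₁ > (γ/β) a₂^{β/γ} / a₀^{(β-γ)/γ}` then the condition of Lemma 2 holds,
and in particular `-a₀ - a₁z^β + a₂z^γ < 0` for all `z ≥ 0`. -/
theorem stmt15 (a₀ a₁ a₂ β γ : ℝ) (h₀ : 0 < a₀) (h₁ : 0 < a₁) (h₂ : 0 < a₂)
    (hβγ : γ < β) (hγ : 1 < γ)
    (h : γ/β * a₂ ^ (β/γ) / a₀ ^ ((β-γ)/γ) < a₁) :
    a₂ ^ (β/(β-γ)) * ((γ/β) ^ (γ/(β-γ)) - (γ/β) ^ (β/(β-γ))) < a₀ * a₁ ^ (γ/(β-γ)) ∧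
      ∀ z ∈ Set.Ici (0:ℝ), -a₀ - a₁ * z ^ β + a₂ * z ^ γ < 0 := by
  have hγ0 : (0:ℝ) < γ := zero_lt_one.trans hγ
  have hβ0 : (0:ℝ) < β := hγ0.trans hβγ
  have hδ : (0:ℝ) < β - γ := sub_pos.mpr hβγ
  set θ : ℝ := γ / β with hθdef
  have hθ0 : 0 < θ := div_pos hγ0 hβ0
  have hθ1 : θ < 1 := (div_lt_one hβ0).mpr hβγ
  -- rewrite h as a ratio inequality
  have hX : a₂ ^ (β/γ) / a₀ ^ ((β-γ)/γ) < a₁ / θ := by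
    rw [lt_div_iff₀ hθ0]
    calc a₂ ^ (β/γ) / a₀ ^ ((β-γ)/γ) * θ
        = θ * a₂ ^ (β/γ) / a₀ ^ ((β-γ)/γ) := by ring
      _ < a₁ := h
  have hXpos : 0 < a₂ ^ (β/γ) / a₀ ^ ((β-γ)/γ) :=
    div_pos (Real.rpow_pos_of_pos h₂ _) (Real.rpow_pos_of_pos h₀ _)
  -- Key fact K : a₂ < (a₁/θ)^θ * a₀^(1-θ)
  have hK : a₂ < (a₁/θ) ^ θ * a₀ ^ (1 - θ) := by
    have := Real.rpow_lt_rpow hXpos.le hX hθ0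
    rw [Real.div_rpow (Real.rpow_pos_of_pos h₂ _).le (Real.rpow_pos_of_pos h₀ _).le,
      ← Real.rpow_mul h₂.le, ← Real.rpow_mul h₀.le] at this
    have e1 : β/γ * θ = 1 := by rw [hθdef]; field_simp
    have e2 : (β-γ)/γ * θ = 1 - θ := by rw [hθdef]; field_simp
    rw [e1, e2, Real.rpow_one, div_lt_iff₀ (Real.rpow_pos_of_pos h₀ _)] at this
    exact this
  constructor
  · -- Part 1 : raise h to power γ/(β-γ)
    have hLpos : 0 < θ * a₂ ^ (β/γ) / a₀ ^ ((β-γ)/γ) :=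
      div_pos (mul_pos hθ0 (Real.rpow_pos_of_pos h₂ _)) (Real.rpow_pos_of_pos h₀ _)
    have key := Real.rpow_lt_rpow hLpos.le h (div_pos hγ0 hδ)
    rw [Real.div_rpow (mul_pos hθ0 (Real.rpow_pos_of_pos h₂ _)).le
        (Real.rpow_pos_of_pos h₀ _).le,
      Real.mul_rpow hθ0.le (Real.rpow_pos_of_pos h₂ _).le,
      ← Real.rpow_mul h₂.le, ← Real.rpow_mul h₀.le] at key
    have e1 : β/γ * (γ/(β-γ)) = β/(β-γ) := by
      rw [div_mul_div_comm, mul_comm β γ, mul_div_mul_left _ _ (ne_of_gt hγ0)]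
    have e2 : (β-γ)/γ * (γ/(β-γ)) = 1 := by
      rw [div_mul_div_comm, mul_comm]
      exact div_self (mul_pos hγ0 hδ).ne'
    rw [e1, e2, Real.rpow_one, div_lt_iff₀ h₀] at key
    have h3 : a₂ ^ (β/(β-γ)) * (θ ^ (γ/(β-γ)) - θ ^ (β/(β-γ)))
        < θ ^ (γ/(β-γ)) * a₂ ^ (β/(β-γ)) := by
      have : (0:ℝ) < θ ^ (β/(β-γ)) := Real.rpow_pos_of_pos hθ0 _
      nlinarith [Real.rpow_pos_of_pos h₂ (β/(β-γ))]
    calc a₂ ^ (β/(β-γ)) * (θ ^ (γ/(β-γ)) - θ ^ (β/(β-γ)))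
        < θ ^ (γ/(β-γ)) * a₂ ^ (β/(β-γ)) := h3
      _ < a₁ ^ (γ/(β-γ)) * a₀ := key
      _ = a₀ * a₁ ^ (γ/(β-γ)) := mul_comm _ _
  · -- Part 2
    intro z hz
    rcases eq_or_lt_of_le (Set.mem_Ici.mp hz : (0:ℝ) ≤ z) with hz0 | hz0
    · rw [← hz0, Real.zero_rpow (ne_of_gt hβ0), Real.zero_rpow (ne_of_gt hγ0)]
      simpa using h₀
    · have hzβ : 0 < z ^ β := Real.rpow_pos_of_pos hz0 _
      have hzγ : 0 < z ^ γ := Real.rpow_pos_of_pos hz0 _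
      -- AM-GM
      have amgm := Real.geom_mean_le_arith_mean2_weighted hθ0.le (by linarith : (0:ℝ) ≤ 1 - θ)
        (mul_pos (div_pos h₁ hθ0) hzβ).le (div_pos h₀ (by linarith : (0:ℝ) < 1-θ)).le
        (by ring)
      have hmul : θ * (a₁/θ * z ^ β) + (1-θ) * (a₀/(1-θ)) = a₁ * z ^ β + a₀ := by
        have hne : (1:ℝ)-θ ≠ 0 := by linarith
        field_simp
      rw [hmul] at amgm
      have hLHS : (a₁/θ) ^ θ * a₀ ^ (1-θ) * z ^ γ
          ≤ (a₁/θ * z ^ β) ^ θ * (a₀/(1-θ)) ^ (1-θ) := by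
        rw [Real.mul_rpow (div_pos h₁ hθ0).le hzβ.le]
        have ez : (z ^ β) ^ θ = z ^ γ := by
          rw [← Real.rpow_mul hz0.le]
          congr 1
          rw [hθdef]
          field_simp
        rw [ez]
        have ha : a₀ ^ (1-θ) ≤ (a₀/(1-θ)) ^ (1-θ) := by
          apply Real.rpow_le_rpow h₀.le _ (by linarith)
          rw [le_div_iff₀ (by linarith : (0:ℝ) < 1-θ)]
          nlinarith
        calc (a₁/θ) ^ θ * a₀ ^ (1-θ) * z ^ γ
            = (a₁/θ) ^ θ * z ^ γ * a₀ ^ (1-θ) := by ring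
          _ ≤ (a₁/θ) ^ θ * z ^ γ * (a₀/(1-θ)) ^ (1-θ) := by
              apply mul_le_mul_of_nonneg_left ha
              positivity
          _ = (a₁/θ) ^ θ * z ^ γ * (a₀/(1-θ)) ^ (1-θ) := rfl
      have h4 : a₂ * z ^ γ < (a₁/θ) ^ θ * a₀ ^ (1-θ) * z ^ γ := by
        exact mul_lt_mul_of_pos_right hK hzγ
      nlinarith
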